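/- arXiv:1707.07967 — 2 statements merged into one kernel-verified Lean document; each statement's English description precedes it below -/
import Mathlib

section
/- Let (X,u) be a classical solution of the coupled ODE–heat system, with in addition ∂ₜₓu continuous. Then for all t > 0, d/dt ∫₀¹ (∂ₓu(x,t))² dx = −(2/γ) ∫₀¹ (∂ₜu(x,t))² dx − 2 ∂ₓu(0,t) · C (A X(t) + B u(1,t)). -/
open Metric intervalIntegral Matrix

/-- Differentiation under the integral sign for a jointly continuous family
with jointly continuous derivative. -/
lemma param_hasDerivAt (f f' : ℝ → ℝ → ℝ)
    (hf : ∀ x s, HasDerivAt (fun s => f x s) (f' x s) s)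
    (hfc : Continuous fun p : ℝ × ℝ => f p.1 p.2)
    (hf'c : Continuous fun p : ℝ × ℝ => f' p.1 p.2)
    (a b t : ℝ) :
    HasDerivAt (fun s => ∫ x in a..b, f x s) (∫ x in a..b, f' x t) t := by
  obtain ⟨M, hM⟩ := ((isCompact_uIcc (a := a) (b := b)).prod
      (isCompact_Icc (a := t - 1) (b := t + 1))).exists_bound_of_continuousOn
      (hf'c.continuousOn)
  have key := intervalIntegral.hasDerivAt_integral_of_dominated_loc_of_deriv_le
    (F := fun s x => f x s) (F' := fun s x => f' x s) (x₀ := t) (a := a) (b := b)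
    (bound := fun _ => M) (μ := MeasureTheory.volume) (s := ball t 1) (ball_mem_nhds t one_pos)
    (Filter.Eventually.of_forall fun s =>
      ((hfc.comp (continuous_id.prodMk continuous_const)).aestronglyMeasurable))
    ((hfc.comp (continuous_id.prodMk continuous_const)).intervalIntegrable a b)
    ((hf'c.comp (continuous_id.prodMk continuous_const)).aestronglyMeasurable)
    (Filter.Eventually.of_forall fun x hx s hs => by
      have : (x, s) ∈ Set.uIcc a b ×ˢ Set.Icc (t - 1) (t + 1) := by
        constructor
        · exact Set.Ioc_subset_Icc_self hx
        · have := mem_ball.mp hs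
          rw [Real.dist_eq] at this
          constructor <;> [linarith [abs_lt.mp this |>.1]; linarith [abs_lt.mp this |>.2]]
      exact hM _ this)
    (intervalIntegrable_const)
    (Filter.Eventually.of_forall fun x _ s _ => hf x s)
  exact key.2

/-- Clairaut/Schwarz: the mixed partial `∂ₜ∂ₓu`, if continuous, also computes `∂ₓ∂ₜu`. -/
lemma schwarz_mixed (u ut ux utx : ℝ → ℝ → ℝ)
    (hut : ∀ x t, HasDerivAt (fun s => u x s) (ut x t) t)
    (hux : ∀ x t, HasDerivAt (fun y => u y t) (ux x t) x)
    (hutx : ∀ x t, HasDerivAt (fun s => ux x s) (utx x t) t)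
    (huxc : Continuous fun p : ℝ × ℝ => ux p.1 p.2)
    (hutxc : Continuous fun p : ℝ × ℝ => utx p.1 p.2) :
    ∀ x t, HasDerivAt (fun y => ut y t) (utx x t) x := by
  have hint : ∀ x t, ut x t - ut 0 t = ∫ y in (0:ℝ)..x, utx y t := by
    intro x t
    have hΦ : HasDerivAt (fun s => ∫ y in (0:ℝ)..x, ux y s)
        (∫ y in (0:ℝ)..x, utx y t) t :=
      param_hasDerivAt ux utx hutx huxc hutxc 0 x t
    have hg : HasDerivAt (fun s => u x s - u 0 s) (ut x t - ut 0 t) t :=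
      (hut x t).sub (hut 0 t)
    have feq : (fun s => u x s - u 0 s) = fun s => ∫ y in (0:ℝ)..x, ux y s := by
      funext s
      exact (intervalIntegral.integral_eq_sub_of_hasDerivAt (fun y _ => hux y s)
        ((huxc.comp (continuous_id.prodMk continuous_const)).intervalIntegrable 0 x)).symm
    rw [feq] at hg
    exact hg.unique hΦ
  intro x t
  have feq : (fun y => ut y t) = fun y => ut 0 t + ∫ z in (0:ℝ)..y, utx z t := by
    funext y
    have := hint y t
    linarith
  rw [feq]
  have hcont : Continuous fun y => utx y t :=
    hutxc.comp (continuous_id.prodMk continuous_const)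
  exact (intervalIntegral.integral_hasDerivAt_right
    (hcont.intervalIntegrable 0 x)
    hcont.aestronglyMeasurable.stronglyMeasurableAtFilter
    hcont.continuousAt).const_add _

/-- along a classical solution `(X,u)` of the coupled ODE–heat system with
`∂ₜₓu` continuous,
`d/dt ∫₀¹ (∂ₓu)² dx = −(2/γ) ∫₀¹ (∂ₜu)² dx − 2 ∂ₓu(0,t) C(A X(t) + B u(1,t))`. -/
theorem h1_energy_derivative {n : ℕ} (A : Matrix (Fin n) (Fin n) ℝ)
    (B : Matrix (Fin n) (Fin 1) ℝ) (C : Matrix (Fin 1) (Fin n) ℝ)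
    (γ : ℝ) (hγ : 0 < γ)
    (X : ℝ → Fin n → ℝ) (u ut ux uxx utx : ℝ → ℝ → ℝ)
    (hX : ContDiff ℝ 1 X)
    (hODE : ∀ t > (0:ℝ), HasDerivAt X (A.mulVec (X t) + fun i => B i 0 * u 1 t) t)
    (hut : ∀ x t, HasDerivAt (fun s => u x s) (ut x t) t)
    (hux : ∀ x t, HasDerivAt (fun y => u y t) (ux x t) x)
    (huxx : ∀ x t, HasDerivAt (fun y => ux y t) (uxx x t) x)
    (hutx : ∀ x t, HasDerivAt (fun s => ux x s) (utx x t) t)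
    (hutc : Continuous fun p : ℝ × ℝ => ut p.1 p.2)
    (huxc : Continuous fun p : ℝ × ℝ => ux p.1 p.2)
    (huxxc : Continuous fun p : ℝ × ℝ => uxx p.1 p.2)
    (hutxc : Continuous fun p : ℝ × ℝ => utx p.1 p.2)
    (hheat : ∀ t > (0:ℝ), ∀ x ∈ Set.Ioo (0:ℝ) 1, ut x t = γ * uxx x t)
    (hdir : ∀ t > (0:ℝ), u 0 t = C.mulVec (X t) 0)
    (hneu : ∀ t > (0:ℝ), ux 1 t = 0)
    (t : ℝ) (ht : 0 < t) :
    deriv (fun s => ∫ x in (0:ℝ)..1, (ux x s) ^ 2) t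
      = -(2 / γ) * (∫ x in (0:ℝ)..1, (ut x t) ^ 2)
        - 2 * ux 0 t * C.mulVec (A.mulVec (X t) + fun i => B i 0 * u 1 t) 0 := by
  -- mixed partial symmetry
  have hSch : ∀ x s, HasDerivAt (fun y => ut y s) (utx x s) x :=
    schwarz_mixed u ut ux utx hut hux hutx huxc hutxc
  -- continuity in x at fixed time t
  have cx : ∀ (f : ℝ → ℝ → ℝ), (Continuous fun p : ℝ × ℝ => f p.1 p.2) →
      Continuous fun x => f x t := fun f hf =>
    hf.comp (continuous_id.prodMk continuous_const)
  -- Step 1: differentiate under the integral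
  have hG : HasDerivAt (fun s => ∫ x in (0:ℝ)..1, (ux x s) ^ 2)
      (∫ x in (0:ℝ)..1, 2 * ux x t * utx x t) t := by
    apply param_hasDerivAt (fun x s => (ux x s) ^ 2) (fun x s => 2 * ux x s * utx x s)
    · intro x s
      have := (hutx x s).fun_pow 2
      simpa [mul_comm, mul_assoc, mul_left_comm] using this
    · exact huxc.pow 2
    · exact (continuous_const.mul huxc).mul hutxc
  rw [hG.deriv]
  -- Step 2: integration by parts via FTC
  have hIBP : (∫ x in (0:ℝ)..1, (uxx x t * ut x t + ux x t * utx x t))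
      = ux 1 t * ut 1 t - ux 0 t * ut 0 t := by
    apply intervalIntegral.integral_eq_sub_of_hasDerivAt (f := fun x => ux x t * ut x t)
    · intro x _
      exact (huxx x t).mul (hSch x t)
    · exact (((cx _ huxxc).mul (cx _ hutc)).add
        ((cx _ huxc).mul (cx _ hutxc))).intervalIntegrable 0 1
  have hsplit : (∫ x in (0:ℝ)..1, (uxx x t * ut x t + ux x t * utx x t))
      = (∫ x in (0:ℝ)..1, uxx x t * ut x t) + ∫ x in (0:ℝ)..1, ux x t * utx x t :=
    intervalIntegral.integral_add
      (((cx _ huxxc).mul (cx _ hutc)).intervalIntegrable 0 1)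
      (((cx _ huxc).mul (cx _ hutxc)).intervalIntegrable 0 1)
  -- Step 3: use the heat equation a.e. on (0,1)
  have hheat_int : (∫ x in (0:ℝ)..1, uxx x t * ut x t)
      = (1 / γ) * ∫ x in (0:ℝ)..1, (ut x t) ^ 2 := by
    rw [← intervalIntegral.integral_const_mul]
    apply intervalIntegral.integral_congr_ae
    have h1 : ∀ᵐ x : ℝ, x ≠ 1 := by
      rw [MeasureTheory.ae_iff]
      simpa using MeasureTheory.measure_singleton (1:ℝ)
    filter_upwards [h1] with x hx hmem
    rw [Set.uIoc_of_le (by norm_num : (0:ℝ) ≤ 1)] at hmem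
    have hxoo : x ∈ Set.Ioo (0:ℝ) 1 := ⟨hmem.1, lt_of_le_of_ne hmem.2 hx⟩
    have := hheat t ht x hxoo
    field_simp [this]
    rw [this]; ring
  -- Step 4: ut at boundary x = 0 from the ODE through the Dirichlet condition
  have hut0 : ut 0 t = C.mulVec (A.mulVec (X t) + fun i => B i 0 * u 1 t) 0 := by
    have hXj : ∀ j, HasDerivAt (fun s => X s j)
        ((A.mulVec (X t) + fun i => B i 0 * u 1 t) j) t :=
      fun j => hasDerivAt_pi.mp (hODE t ht) j
    have hCX : HasDerivAt (fun s => C.mulVec (X s) 0)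
        (C.mulVec (A.mulVec (X t) + fun i => B i 0 * u 1 t) 0) t := by
      simp only [Matrix.mulVec, dotProduct]
      exact HasDerivAt.fun_sum fun j _ => (hXj j).const_mul (C 0 j)
    have hev : (fun s => u 0 s) =ᶠ[nhds t] fun s => C.mulVec (X s) 0 := by
      filter_upwards [lt_mem_nhds ht] with s hs
      exact hdir s hs
    exact (hut 0 t).unique (hCX.congr_of_eventuallyEq hev)
  -- Put everything together
  have h2 : (∫ x in (0:ℝ)..1, 2 * ux x t * utx x t)
      = 2 * ∫ x in (0:ℝ)..1, ux x t * utx x t := by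
    rw [← intervalIntegral.integral_const_mul]
    congr 1; funext x; ring
  have hnu := hneu t ht
  have hJ : (∫ x in (0:ℝ)..1, ux x t * utx x t)
      = - ((1 / γ) * ∫ x in (0:ℝ)..1, (ut x t) ^ 2)
        - ux 0 t * C.mulVec (A.mulVec (X t) + fun i => B i 0 * u 1 t) 0 := by
    rw [hsplit, hheat_int, hnu, hut0] at hIBP
    linarith
  rw [h2, hJ]
  have hγ' : γ ≠ 0 := hγ.ne'
  field_simp
  simp only [mul_comm (u 1 t)]
end

section
/- (Bessel bound for the time derivative in projected coordinates) Let u : [0,1] × [0,∞) → ℝ have continuous partial derivatives ∂ₜu, ∂ₓu, ∂ₓₓu, satisfy ∂ₜu = γ∂ₓₓu on (0,1) with ∂ₓu(1,t) = 0 for some γ > 0, and let N ∈ ℕ and t > 0. Then ∫₀¹ (∂ₜu(x,t))² dx ≥ γ² Σ_{k=0}^{N+2} (2k+1) · m_k(t)², where m_0(t) = −∂ₓu(0,t), m_1(t) = 2u(0,t) − 2u(1,t) + ∂ₓu(0,t), and for k ≥ 2, m_k(t) = Σ_{j=1}^{k−1} Σ_{i=0}^{j−1} ℓ_{kj} ℓ_{ji}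 ⟨u(·,t), L_i⟩ + u(0,t)·Σ_{j=0}^{k−1} ℓ_{kj}(−1)^j − u(1,t)·Σ_{j=0}^{k−1} ℓ_{kj} − (−1)^k ∂ₓu(0,t). -/
open Polynomial MeasureTheory intervalIntegral Set


/-- The shifted Legendre polynomial on `[0,1]`: `L_k(x) = (1/k!) dᵏ/dxᵏ [(x² - x)ᵏ]`. -/
noncomputable def shiftedLegendre (k : ℕ) : ℝ → ℝ :=
  fun x => (1 / (Nat.factorial k : ℝ)) * iteratedDeriv k (fun y => (y ^ 2 - y) ^ k) x

/-- `ℓ_{kj} = (2j+1)(1−(−1)^{k+j})` if `j ≤ k−1`, and `ℓ_{kj} = 0` if `j ≥ k`. -/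
noncomputable def ell (k j : ℕ) : ℝ :=
  if j < k then (2 * (j : ℝ) + 1) * (1 - (-1 : ℝ) ^ (k + j)) else 0


noncomputable def W (k : ℕ) : ℝ[X] := (X^2 - X)^k

lemma polyII (p : ℝ[X]) (f : ℝ → ℝ) (hf : Continuous f) :
    IntervalIntegrable (fun x => f x * p.eval x) volume 0 1 :=
  (hf.mul p.continuous_aeval).intervalIntegrable 0 1

lemma ibp_poly (p q : ℝ[X]) (hq0 : q.eval 0 = 0) (hq1 : q.eval 1 = 0) :
    ∫ x in (0:ℝ)..1, p.eval x * (derivative q).eval x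
      = - ∫ x in (0:ℝ)..1, (derivative p).eval x * q.eval x := by
  have h := intervalIntegral.integral_mul_deriv_eq_deriv_mul
    (a := (0:ℝ)) (b := 1)
    (u := fun x => p.eval x) (v := fun x => q.eval x)
    (u' := fun x => (derivative p).eval x) (v' := fun x => (derivative q).eval x)
    (fun x _ => p.hasDerivAt x) (fun x _ => q.hasDerivAt x)
    ((derivative p).continuous_aeval.intervalIntegrable 0 1)
    ((derivative q).continuous_aeval.intervalIntegrable 0 1)
  rw [h]; simp [hq0, hq1]

lemma vanish_factor (k i : ℕ) (h : i < k) :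
    ∃ r : ℝ[X], derivative^[i] (W k) = (X^2 - X)^(k - i) * r := by
  induction i with
  | zero => exact ⟨1, by simp [W]⟩
  | succ i ih =>
    obtain ⟨r, hr⟩ := ih (Nat.lt_of_succ_lt h)
    obtain ⟨m, hm⟩ : ∃ m, k - i = m + 1 := ⟨k - i - 1, by omega⟩
    refine ⟨C ((m:ℝ)+1) * (2*X - 1) * r + (X^2 - X) * derivative r, ?_⟩
    rw [Function.iterate_succ_apply', hr, hm]
    have hki : k - (i+1) = m := by omega
    have hC : (C 2 : ℝ[X]) = 2 := map_ofNat C 2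
    rw [hki, derivative_mul, derivative_pow]
    simp only [map_add, map_one, Polynomial.C_eq_natCast, derivative_sub, derivative_pow,
      derivative_X, hC]
    push_cast
    ring

lemma eval_vanish {k i : ℕ} (h : i < k) (x : ℝ) (hx : x = 0 ∨ x = 1) :
    (derivative^[i] (W k)).eval x = 0 := by
  obtain ⟨r, hr⟩ := vanish_factor k i h
  have : k - i ≠ 0 := by omega
  rcases hx with rfl | rfl <;> simp [hr, zero_pow this]

lemma ibp_iter (k : ℕ) (q : ℝ[X]) : ∀ m, m ≤ k →
    ∫ x in (0:ℝ)..1, q.eval x * (derivative^[k] (W k)).eval x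
      = (-1)^m * ∫ x in (0:ℝ)..1, (derivative^[m] q).eval x * (derivative^[k-m] (W k)).eval x := by
  intro m
  induction m with
  | zero => simp
  | succ m ih =>
    intro h
    rw [ih (by omega)]
    have h1 : k - m = (k - (m+1)) + 1 := by omega
    have h2 : k - (m+1) < k := by omega
    rw [h1, Function.iterate_succ_apply',
      ibp_poly (derivative^[m] q) (derivative^[k-(m+1)] (W k))
        (eval_vanish h2 0 (Or.inl rfl)) (eval_vanish h2 1 (Or.inr rfl)),
      ← Function.iterate_succ_apply' derivative m q]
    ring

lemma ortho_lt {q : ℝ[X]} {k : ℕ} (h : q.natDegree < k) :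
    ∫ x in (0:ℝ)..1, q.eval x * (derivative^[k] (W k)).eval x = 0 := by
  rw [ibp_iter k q k le_rfl, iterate_derivative_eq_zero h]
  simp

lemma beta_J (m : ℕ) : ∀ n : ℕ, (∫ x in (0:ℝ)..1, x^n * (x-1)^m)
    = (-1)^m * m.factorial * n.factorial / (m+n+1).factorial := by
  induction m with
  | zero =>
    intro n
    simp [integral_pow, Nat.factorial_succ]
    field_simp
  | succ m ih =>
    intro n
    have hn : ((n:ℝ)+1) ≠ 0 := by positivity
    have h := intervalIntegral.integral_mul_deriv_eq_deriv_mul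
      (a := (0:ℝ)) (b := 1)
      (u := fun x => (x-1)^(m+1)) (u' := fun x => ((m:ℝ)+1)*(x-1)^m)
      (v := fun x => x^(n+1)/((n:ℝ)+1)) (v' := fun x => x^n)
      (fun x _ => by
        simpa using (((hasDerivAt_id x).sub_const 1).fun_pow (m+1)))
      (fun x _ => by
        have := (hasDerivAt_pow (n+1) x).div_const ((n:ℝ)+1)
        simpa [mul_div_assoc, mul_div_cancel_left₀ _ hn] using this)
      ((by continuity : Continuous fun x : ℝ => ((m:ℝ)+1)*(x-1)^m).intervalIntegrable 0 1)
      ((by continuity : Continuous fun x : ℝ => x^n).intervalIntegrable 0 1)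
    have hcomm : (∫ x in (0:ℝ)..1, x^n * (x-1)^(m+1))
        = ∫ x in (0:ℝ)..1, (x-1)^(m+1) * x^n := by
      congr 1; funext x; ring
    rw [hcomm, h]
    simp only [one_pow, sub_self, zero_pow (Nat.succ_ne_zero m), zero_mul, mul_zero]
    have : (∫ x in (0:ℝ)..1, ((m:ℝ)+1)*(x-1)^m * (x^(n+1)/((n:ℝ)+1)))
        = (((m:ℝ)+1)/((n:ℝ)+1)) * ∫ x in (0:ℝ)..1, x^(n+1) * (x-1)^m := by
      rw [← intervalIntegral.integral_const_mul]
      congr 1; funext x; ring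
    rw [this, ih (n+1)]
    have e1 : ((m+1+n+1 : ℕ) : ℝ) ≠ 0 := by positivity
    simp only [Nat.factorial_succ, pow_succ]
    push_cast
    have hmn : ((m:ℝ) + (n:ℝ) + 1 + 1) = (m:ℝ)+1+(n:ℝ)+1 := by ring
    field_simp
    ring

lemma monic_W (k : ℕ) : (W k).Monic := by
  unfold W
  exact (Polynomial.monic_X_pow_sub (p := (X:ℝ[X])) (n := 2)
    (by rw [Polynomial.degree_X]; decide)).pow k

lemma natDegree_W (k : ℕ) : (W k).natDegree = 2*k := by
  unfold W
  rw [natDegree_pow]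
  have h : (X^2 - X : ℝ[X]).natDegree = 2 := by compute_degree!
  rw [h]; omega

lemma coeff_W_top (k : ℕ) : (W k).coeff (2*k) = 1 := by
  have := (monic_W k).leadingCoeff
  rwa [leadingCoeff, natDegree_W] at this

lemma iter_deriv_W_top (k : ℕ) :
    derivative^[2*k] (W k) = C (((2*k).factorial : ℝ)) := by
  ext m
  rw [coeff_iterate_derivative]
  rcases Nat.eq_zero_or_pos m with rfl | hm
  · simp [coeff_W_top, Nat.descFactorial_self]
  · have h1 : (W k).natDegree < m + 2*k := by rw [natDegree_W]; omega
    rw [coeff_eq_zero_of_natDegree_lt h1, coeff_C, if_neg (by omega)]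
    simp

lemma integral_W (k : ℕ) : (∫ x in (0:ℝ)..1, (W k).eval x)
    = (-1)^k * k.factorial * k.factorial / (2*k+1).factorial := by
  have : (∫ x in (0:ℝ)..1, (W k).eval x) = ∫ x in (0:ℝ)..1, x^k * (x-1)^k := by
    congr 1; funext x; simp only [W, eval_pow, eval_sub, eval_X, eval_pow, eval_mul]
    rw [← mul_pow]; congr 1; ring
  rw [this, beta_J k k]
  congr 3
  omega

noncomputable def legPoly (k : ℕ) : ℝ[X] :=
  C (1 / (k.factorial : ℝ)) * derivative^[k] (W k)

lemma iteratedDeriv_polyeval (p : ℝ[X]) (n : ℕ) :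
    iteratedDeriv n (fun x => p.eval x) = fun x => (derivative^[n] p).eval x := by
  induction n with
  | zero => simp
  | succ n ih =>
    rw [iteratedDeriv_succ, ih, Function.iterate_succ_apply']
    funext x; exact Polynomial.deriv _

lemma shiftedLegendre_eq (k : ℕ) (x : ℝ) : shiftedLegendre k x = (legPoly k).eval x := by
  unfold _root_.shiftedLegendre legPoly W
  have h : (fun y : ℝ => (y^2 - y)^k) = fun y => ((X^2 - X : ℝ[X])^k).eval y := by
    funext y; simp
  rw [h, iteratedDeriv_polyeval]; simp

lemma natDegree_legPoly_le (k : ℕ) : (legPoly k).natDegree ≤ k := by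
  unfold legPoly
  refine (natDegree_C_mul_le _ _).trans ?_
  have := natDegree_iterate_derivative (W k) k
  rw [natDegree_W] at this; omega

lemma coeff_legPoly_top (k : ℕ) :
    (legPoly k).coeff k = ((2*k).descFactorial k : ℝ) / k.factorial := by
  unfold legPoly
  rw [coeff_C_mul, coeff_iterate_derivative]
  have : k + k = 2*k := by omega
  rw [this, coeff_W_top]
  simp [div_eq_mul_inv]; ring

lemma hW_split (k : ℕ) : W k = X^k * (X - C 1)^k := by
  unfold W; rw [← mul_pow]; congr 1; simp; ring

lemma legPoly_eval_one (k : ℕ) : (legPoly k).eval 1 = 1 := by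
  unfold legPoly
  rw [hW_split, iterate_derivative_mul]
  rw [eval_mul, eval_C, eval_finset_sum]
  rw [Finset.sum_eq_single k]
  · rw [Nat.sub_self, Function.iterate_zero_apply, iterate_derivative_X_sub_pow_self,
      Nat.choose_self, one_smul, eval_mul, eval_pow, eval_X, eval_natCast]
    simp [Nat.factorial_ne_zero]
  · intro i hi hik
    have hik' : i < k := by simp at hi; omega
    rw [iterate_derivative_X_sub_pow]
    have : k - i ≠ 0 := by omega
    simp [eval_smul, this, zero_pow this]
  · intro h; simp at h

lemma legPoly_eval_zero (k : ℕ) : (legPoly k).eval 0 = (-1)^k := by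
  unfold legPoly
  rw [hW_split, iterate_derivative_mul]
  rw [eval_mul, eval_C, eval_finset_sum]
  rw [Finset.sum_eq_single 0]
  · rw [Nat.sub_zero, Nat.choose_zero_right, one_smul, Function.iterate_zero_apply,
      iterate_derivative_X_pow_eq_natCast_mul, Nat.descFactorial_self, Nat.sub_self, pow_zero,
      mul_one, eval_mul, eval_natCast, eval_pow, eval_sub, eval_X, eval_C]
    simp [Nat.factorial_ne_zero]
  · intro i hi hik
    rw [iterate_derivative_X_pow_eq_natCast_mul]
    have h1 : k - (k - i) ≠ 0 := by simp at hi; omega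
    simp [zero_pow h1]
  · intro h; simp at h

lemma ortho_lt_leg (q : ℝ[X]) (k : ℕ) (h : q.natDegree < k) :
    ∫ x in (0:ℝ)..1, q.eval x * (legPoly k).eval x = 0 := by
  unfold legPoly
  have h2 : (∫ x in (0:ℝ)..1, q.eval x * (C (1/(k.factorial:ℝ)) * derivative^[k] (W k)).eval x)
      = (1/(k.factorial:ℝ)) * ∫ x in (0:ℝ)..1, q.eval x * (derivative^[k] (W k)).eval x := by
    rw [← intervalIntegral.integral_const_mul]; congr 1; funext x; simp; ring
  rw [h2, ortho_lt h, mul_zero]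

lemma legPoly_norm (k : ℕ) :
    ∫ x in (0:ℝ)..1, (legPoly k).eval x * (legPoly k).eval x = 1/(2*(k:ℝ)+1) := by
  set D := derivative^[k] (W k) with hD
  have hpull : (∫ x in (0:ℝ)..1, (legPoly k).eval x * (legPoly k).eval x)
      = (1/(k.factorial:ℝ))^2 * ∫ x in (0:ℝ)..1, D.eval x * D.eval x := by
    rw [← intervalIntegral.integral_const_mul]; congr 1; funext x
    simp [legPoly, ← hD]; ring
  rw [hpull, ibp_iter k D k le_rfl]
  have h2k : derivative^[k] D = C (((2*k).factorial : ℝ)) := by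
    rw [hD, ← Function.iterate_add_apply]
    have : k + k = 2*k := by omega
    rw [this, iter_deriv_W_top]
  rw [h2k, Nat.sub_self, Function.iterate_zero_apply]
  have h3 : (∫ x in (0:ℝ)..1, (C (((2*k).factorial : ℝ))).eval x * (W k).eval x)
      = ((2*k).factorial : ℝ) * ∫ x in (0:ℝ)..1, (W k).eval x := by
    rw [← intervalIntegral.integral_const_mul]; congr 1; funext x; simp
  rw [h3, integral_W]
  have hfac : ((2*k+1).factorial : ℝ) = (2*(k:ℝ)+1) * ((2*k).factorial : ℝ) := by
    rw [Nat.factorial_succ]; push_cast; ring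
  have h4 : ((2*k).factorial : ℝ) ≠ 0 := Nat.cast_ne_zero.mpr (Nat.factorial_ne_zero _)
  have h5 : (k.factorial : ℝ) ≠ 0 := Nat.cast_ne_zero.mpr (Nat.factorial_ne_zero _)
  have h6 : (2*(k:ℝ)+1) ≠ 0 := by positivity
  rw [hfac]
  have h8 : ((-1:ℝ)^(k*2)) = 1 := by
    rw [pow_mul']; norm_num
  field_simp
  ring_nf
  rw [h8]

lemma ortho (j k : ℕ) : (∫ x in (0:ℝ)..1, (legPoly j).eval x * (legPoly k).eval x)
    = if j = k then 1/(2*(j:ℝ)+1) else 0 := by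
  rcases lt_trichotomy j k with h | rfl | h
  · rw [if_neg h.ne]; exact ortho_lt_leg _ _ ((natDegree_legPoly_le j).trans_lt h)
  · rw [if_pos rfl]; exact legPoly_norm j
  · rw [if_neg h.ne']
    have : (∫ x in (0:ℝ)..1, (legPoly j).eval x * (legPoly k).eval x)
        = ∫ x in (0:ℝ)..1, (legPoly k).eval x * (legPoly j).eval x := by
      congr 1; funext x; ring
    rw [this]
    exact ortho_lt_leg _ _ ((natDegree_legPoly_le k).trans_lt h)

lemma legPoly_zero : legPoly 0 = 1 := by
  unfold legPoly W; simp

lemma leadA_pos (m : ℕ) : (0:ℝ) < ((2*m).descFactorial m : ℝ)/(m.factorial : ℝ) := by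
  apply div_pos
  · have : (2*m).descFactorial m ≠ 0 := by
      rw [Ne, Nat.descFactorial_eq_zero_iff_lt]; omega
    exact_mod_cast Nat.cast_pos.mpr (Nat.pos_of_ne_zero this)
  · exact_mod_cast Nat.cast_pos.mpr m.factorial_pos

lemma span_leg (n : ℕ) : ∀ q : ℝ[X], q.natDegree ≤ n → ∃ c : ℕ → ℝ,
    q = ∑ j ∈ Finset.range (n+1), C (c j) * legPoly j := by
  induction n with
  | zero =>
    intro q hq
    refine ⟨fun _ => q.coeff 0, ?_⟩
    rw [Finset.sum_range_one, legPoly_zero, mul_one, eq_C_of_natDegree_le_zero hq]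
    simp
  | succ n ih =>
    intro q hq
    set a : ℝ := ((2*(n+1)).descFactorial (n+1) : ℝ)/((n+1).factorial : ℝ) with ha
    have ha0 : a ≠ 0 := (leadA_pos (n+1)).ne'
    set r := q - C (q.coeff (n+1) / a) * legPoly (n+1) with hr
    have hrd : r.natDegree ≤ n := by
      rw [natDegree_le_iff_coeff_eq_zero]
      intro m hm
      rcases eq_or_lt_of_le (Nat.succ_le_of_lt hm) with hm1 | hm1
      · rw [hr, coeff_sub, coeff_C_mul, ← hm1, coeff_legPoly_top, ← ha,
          div_mul_cancel₀ _ ha0, sub_self]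
      · rw [hr, coeff_sub, coeff_C_mul,
          coeff_eq_zero_of_natDegree_lt (lt_of_le_of_lt hq hm1),
          coeff_eq_zero_of_natDegree_lt (lt_of_le_of_lt (natDegree_legPoly_le (n+1)) hm1)]
        ring
    obtain ⟨c, hc⟩ := ih r hrd
    refine ⟨fun j => if j = n+1 then q.coeff (n+1)/a else c j, ?_⟩
    rw [Finset.sum_range_succ]
    beta_reduce
    rw [if_pos rfl]
    have : ∑ j ∈ Finset.range (n+1), C (if j = n+1 then q.coeff (n+1)/a else c j) * legPoly j
        = ∑ j ∈ Finset.range (n+1), C (c j) * legPoly j := by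
      apply Finset.sum_congr rfl
      intro j hj
      rw [if_neg (by simp at hj; omega)]
    rw [this, ← hc, hr]
    ring

lemma contEvalMul (p q : ℝ[X]) : Continuous fun x : ℝ => p.eval x * q.eval x :=
  p.continuous_aeval.mul q.continuous_aeval

lemma integral_sum_leg (k i : ℕ) (c : ℕ → ℝ) (hik : i < k) :
    (∫ x in (0:ℝ)..1, (∑ j ∈ Finset.range k, C (c j) * legPoly j).eval x * (legPoly i).eval x)
      = c i / (2*(i:ℝ)+1) := by
  have h1 : (fun x : ℝ => (∑ j ∈ Finset.range k, C (c j) * legPoly j).eval x * (legPoly i).eval x)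
      = fun x : ℝ => ∑ j ∈ Finset.range k, c j * ((legPoly j).eval x * (legPoly i).eval x) := by
    funext x
    rw [eval_finset_sum, Finset.sum_mul]
    refine Finset.sum_congr rfl fun j _ => ?_
    simp; ring
  calc (∫ x in (0:ℝ)..1, (∑ j ∈ Finset.range k, C (c j) * legPoly j).eval x * (legPoly i).eval x)
      = ∫ x in (0:ℝ)..1, ∑ j ∈ Finset.range k,
          c j * ((legPoly j).eval x * (legPoly i).eval x) := by rw [h1]
    _ = ∑ j ∈ Finset.range k, ∫ x in (0:ℝ)..1,
          c j * ((legPoly j).eval x * (legPoly i).eval x) :=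
        intervalIntegral.integral_finset_sum (fun j _ =>
          (((continuous_const.mul (contEvalMul _ _))).intervalIntegrable 0 1))
    _ = ∑ j ∈ Finset.range k, c j *
          ∫ x in (0:ℝ)..1, (legPoly j).eval x * (legPoly i).eval x := by
        refine Finset.sum_congr rfl fun j _ => intervalIntegral.integral_const_mul _ _
    _ = c i / (2*(i:ℝ)+1) := by
        rw [Finset.sum_eq_single i]
        · rw [ortho i i, if_pos rfl]; ring
        · intro j hj hji; rw [ortho j i, if_neg hji, mul_zero]
        · intro h; exact absurd (Finset.mem_range.mpr hik) h

lemma ibp_leg (k i : ℕ) (hik : i < k) :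
    (∫ x in (0:ℝ)..1, (derivative (legPoly k)).eval x * (legPoly i).eval x)
      = 1 - (-1:ℝ)^(k+i) := by
  have h := intervalIntegral.integral_mul_deriv_eq_deriv_mul (a := (0:ℝ)) (b := 1)
    (u := fun x => (legPoly i).eval x) (v := fun x => (legPoly k).eval x)
    (u' := fun x => (derivative (legPoly i)).eval x)
    (v' := fun x => (derivative (legPoly k)).eval x)
    (fun x _ => (legPoly i).hasDerivAt x) (fun x _ => (legPoly k).hasDerivAt x)
    ((derivative (legPoly i)).continuous_aeval.intervalIntegrable 0 1)
    ((derivative (legPoly k)).continuous_aeval.intervalIntegrable 0 1)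
  have hdeg : (derivative (legPoly i)).natDegree < k := by
    have h1 := natDegree_derivative_le (legPoly i)
    have h2 := natDegree_legPoly_le i
    omega
  have hz := ortho_lt_leg (derivative (legPoly i)) k hdeg
  have hcomm : (∫ x in (0:ℝ)..1, (derivative (legPoly k)).eval x * (legPoly i).eval x)
      = ∫ x in (0:ℝ)..1, (legPoly i).eval x * (derivative (legPoly k)).eval x := by
    congr 1; funext x; ring
  rw [hcomm, h]
  simp only [legPoly_eval_one, legPoly_eval_zero]
  rw [hz, pow_add]
  ring

lemma deriv_legPoly (k : ℕ) :
    derivative (legPoly k) = ∑ j ∈ Finset.range k, C (ell k j) * legPoly j := by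
  rcases Nat.eq_zero_or_pos k with rfl | hk
  · simp [legPoly_zero]
  set p := derivative (legPoly k) - ∑ j ∈ Finset.range k, C (ell k j) * legPoly j with hp
  have hdeg : p.natDegree ≤ k - 1 := by
    refine le_trans (natDegree_sub_le _ _) (max_le ?_ ?_)
    · have h1 := natDegree_derivative_le (legPoly k)
      have h2 := natDegree_legPoly_le k
      omega
    · refine Polynomial.natDegree_sum_le_of_forall_le _ _ fun j hj => ?_
      refine le_trans (natDegree_C_mul_le _ _) ?_
      have := natDegree_legPoly_le j
      simp at hj; omega
  have horth : ∀ i, i < k → (∫ x in (0:ℝ)..1, p.eval x * (legPoly i).eval x) = 0 := by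
    intro i hik
    have hsplit : (fun x : ℝ => p.eval x * (legPoly i).eval x)
        = fun x : ℝ => (derivative (legPoly k)).eval x * (legPoly i).eval x
          - (∑ j ∈ Finset.range k, C (ell k j) * legPoly j).eval x * (legPoly i).eval x := by
      funext x; rw [hp]; simp [eval_finset_sum]; ring
    have hint : (∫ x in (0:ℝ)..1, p.eval x * (legPoly i).eval x)
        = (∫ x in (0:ℝ)..1, (derivative (legPoly k)).eval x * (legPoly i).eval x)
          - ∫ x in (0:ℝ)..1,
              (∑ j ∈ Finset.range k, C (ell k j) * legPoly j).eval x * (legPoly i).eval x := by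
      rw [← intervalIntegral.integral_sub
        ((contEvalMul _ _).intervalIntegrable 0 1)
        ((contEvalMul _ _).intervalIntegrable 0 1)]
      congr 1
    rw [hint, ibp_leg k i hik, integral_sum_leg k i _ hik]
    have h2i : (2*(i:ℝ)+1) ≠ 0 := by positivity
    rw [ell, if_pos hik]
    field_simp
    ring
  obtain ⟨c, hc⟩ := span_leg (k-1) p hdeg
  have hrange : k - 1 + 1 = k := by omega
  rw [hrange] at hc
  have hc0 : ∀ i ∈ Finset.range k, c i = 0 := by
    intro i hi
    have hik := Finset.mem_range.mp hi
    have h0 := horth i hik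
    rw [hc, integral_sum_leg k i c hik] at h0
    have h2i : (2*(i:ℝ)+1) ≠ 0 := by positivity
    field_simp at h0
    simpa using h0
  have hpz : p = 0 := by
    rw [hc]
    exact Finset.sum_eq_zero fun j hj => by rw [hc0 j hj]; simp
  have := sub_eq_zero.mp (hp ▸ hpz)
  exact this

lemma bessel (f : ℝ → ℝ) (hf : Continuous f) (n : ℕ) :
    (∫ x in (0:ℝ)..1, (f x)^2)
      ≥ ∑ k ∈ Finset.range n,
          (2*(k:ℝ)+1) * (∫ x in (0:ℝ)..1, f x * (legPoly k).eval x)^2 := by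
  set c : ℕ → ℝ := fun k => ∫ x in (0:ℝ)..1, f x * (legPoly k).eval x with hc
  set G : ℝ[X] := ∑ k ∈ Finset.range n, C ((2*(k:ℝ)+1) * c k) * legPoly k with hG
  have hfg : (∫ x in (0:ℝ)..1, f x * G.eval x)
      = ∑ k ∈ Finset.range n, (2*(k:ℝ)+1) * (c k)^2 := by
    have h1 : (fun x : ℝ => f x * G.eval x)
        = fun x : ℝ => ∑ k ∈ Finset.range n, (2*(k:ℝ)+1) * c k * (f x * (legPoly k).eval x) := by
      funext x
      rw [hG, eval_finset_sum, Finset.mul_sum]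
      refine Finset.sum_congr rfl fun k _ => ?_
      simp; ring
    calc (∫ x in (0:ℝ)..1, f x * G.eval x)
        = ∫ x in (0:ℝ)..1, ∑ k ∈ Finset.range n,
            (2*(k:ℝ)+1) * c k * (f x * (legPoly k).eval x) := by rw [h1]
      _ = ∑ k ∈ Finset.range n, ∫ x in (0:ℝ)..1,
            (2*(k:ℝ)+1) * c k * (f x * (legPoly k).eval x) :=
          intervalIntegral.integral_finset_sum (fun k _ =>
            ((continuous_const.mul (hf.mul (legPoly k).continuous_aeval)).intervalIntegrable 0 1))
      _ = ∑ k ∈ Finset.range n, (2*(k:ℝ)+1) * (c k)^2 := by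
          refine Finset.sum_congr rfl fun k _ => ?_
          rw [intervalIntegral.integral_const_mul,
            show (∫ x in (0:ℝ)..1, f x * eval x (legPoly k)) = c k from rfl]
          ring
  have hgg : (∫ x in (0:ℝ)..1, G.eval x * G.eval x)
      = ∑ k ∈ Finset.range n, (2*(k:ℝ)+1) * (c k)^2 := by
    have h1 : (fun x : ℝ => G.eval x * G.eval x)
        = fun x : ℝ => ∑ k ∈ Finset.range n,
            (2*(k:ℝ)+1) * c k * (G.eval x * (legPoly k).eval x) := by
      funext x
      conv_lhs => rw [hG]
      rw [eval_finset_sum, Finset.sum_mul]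
      refine Finset.sum_congr rfl fun k _ => ?_
      simp; ring
    calc (∫ x in (0:ℝ)..1, G.eval x * G.eval x)
        = ∫ x in (0:ℝ)..1, ∑ k ∈ Finset.range n,
            (2*(k:ℝ)+1) * c k * (G.eval x * (legPoly k).eval x) := by rw [h1]
      _ = ∑ k ∈ Finset.range n, ∫ x in (0:ℝ)..1,
            (2*(k:ℝ)+1) * c k * (G.eval x * (legPoly k).eval x) :=
          intervalIntegral.integral_finset_sum (fun k _ =>
            ((continuous_const.mul (contEvalMul _ _)).intervalIntegrable 0 1))
      _ = ∑ k ∈ Finset.range n, (2*(k:ℝ)+1) * (c k)^2 := by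
          refine Finset.sum_congr rfl fun k hk => ?_
          rw [intervalIntegral.integral_const_mul, hG,
            integral_sum_leg n k _ (Finset.mem_range.mp hk)]
          have : (2*(k:ℝ)+1) ≠ 0 := by positivity
          field_simp
  have hexp : (fun x : ℝ => (f x - G.eval x)^2)
      = fun x : ℝ => (f x)^2 - (2*(f x * G.eval x) - G.eval x * G.eval x) := by
    funext x; ring
  have hintf2 : IntervalIntegrable (fun x : ℝ => (f x)^2) volume 0 1 :=
    (hf.pow 2).intervalIntegrable 0 1
  have hintfg : IntervalIntegrable (fun x : ℝ => 2*(f x * G.eval x) - G.eval x * G.eval x)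
      volume 0 1 :=
    ((continuous_const.mul (hf.mul G.continuous_aeval)).sub (contEvalMul _ _)).intervalIntegrable 0 1
  have key : (∫ x in (0:ℝ)..1, (f x - G.eval x)^2)
      = (∫ x in (0:ℝ)..1, (f x)^2) - ∑ k ∈ Finset.range n, (2*(k:ℝ)+1) * (c k)^2 := by
    have hsub2 : (∫ x in (0:ℝ)..1, (2*(f x * G.eval x) - G.eval x * G.eval x))
        = (∫ x in (0:ℝ)..1, 2*(f x * G.eval x)) - ∫ x in (0:ℝ)..1, G.eval x * G.eval x :=
      intervalIntegral.integral_sub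
        ((continuous_const.mul (hf.mul G.continuous_aeval)).intervalIntegrable 0 1)
        ((contEvalMul G G).intervalIntegrable 0 1)
    rw [hexp, intervalIntegral.integral_sub hintf2 hintfg, hsub2,
      intervalIntegral.integral_const_mul, hfg, hgg]
    ring
  have pos : 0 ≤ ∫ x in (0:ℝ)..1, (f x - G.eval x)^2 :=
    intervalIntegral.integral_nonneg (by norm_num) (fun x _ => sq_nonneg _)
  rw [key] at pos
  rw [ge_iff_le]
  have : ∑ k ∈ Finset.range n, (2*(k:ℝ)+1) * (∫ x in (0:ℝ)..1, f x * (legPoly k).eval x)^2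
      = ∑ k ∈ Finset.range n, (2*(k:ℝ)+1) * (c k)^2 := rfl
  rw [this]
  linarith

lemma integral_mul_sum (g : ℝ → ℝ) (hg : Continuous g) (n : ℕ) (c : ℕ → ℝ) :
    (∫ x in (0:ℝ)..1, g x * (∑ j ∈ Finset.range n, C (c j) * legPoly j).eval x)
      = ∑ j ∈ Finset.range n, c j * ∫ x in (0:ℝ)..1, g x * (legPoly j).eval x := by
  have h1 : (fun x : ℝ => g x * (∑ j ∈ Finset.range n, C (c j) * legPoly j).eval x)
      = fun x : ℝ => ∑ j ∈ Finset.range n, c j * (g x * (legPoly j).eval x) := by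
    funext x
    rw [eval_finset_sum, Finset.mul_sum]
    refine Finset.sum_congr rfl fun j _ => ?_
    simp; ring
  calc (∫ x in (0:ℝ)..1, g x * (∑ j ∈ Finset.range n, C (c j) * legPoly j).eval x)
      = ∫ x in (0:ℝ)..1, ∑ j ∈ Finset.range n, c j * (g x * (legPoly j).eval x) := by rw [h1]
    _ = ∑ j ∈ Finset.range n, ∫ x in (0:ℝ)..1, c j * (g x * (legPoly j).eval x) :=
        intervalIntegral.integral_finset_sum (fun j _ =>
          ((continuous_const.mul (hg.mul (legPoly j).continuous_aeval)).intervalIntegrable 0 1))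
    _ = ∑ j ∈ Finset.range n, c j * ∫ x in (0:ℝ)..1, g x * (legPoly j).eval x := by
        refine Finset.sum_congr rfl fun j _ => intervalIntegral.integral_const_mul _ _

lemma ibp_fun (a a' : ℝ → ℝ) (ha : ∀ x, HasDerivAt a (a' x) x) (ha' : Continuous a')
    (P : ℝ[X]) :
    (∫ x in (0:ℝ)..1, a' x * P.eval x)
      = a 1 * P.eval 1 - a 0 * P.eval 0 - ∫ x in (0:ℝ)..1, a x * (derivative P).eval x := by
  have h := intervalIntegral.integral_mul_deriv_eq_deriv_mul (a := (0:ℝ)) (b := 1)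
    (u := fun x => P.eval x) (v := a)
    (u' := fun x => (derivative P).eval x) (v' := a')
    (fun x _ => P.hasDerivAt x) (fun x _ => ha x)
    ((derivative P).continuous_aeval.intervalIntegrable 0 1)
    (ha'.intervalIntegrable 0 1)
  have hc1 : (∫ x in (0:ℝ)..1, a' x * P.eval x) = ∫ x in (0:ℝ)..1, P.eval x * a' x := by
    congr 1; funext x; ring
  have hc2 : (∫ x in (0:ℝ)..1, (derivative P).eval x * a x)
      = ∫ x in (0:ℝ)..1, a x * (derivative P).eval x := by
    congr 1; funext x; ring
  rw [hc1, h, hc2]; ring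

/-- Bessel bound for the time derivative in projected coordinates:
for a solution of the heat equation `∂ₜu = γ∂ₓₓu` on `(0,1)` with `∂ₓu(1,t) = 0`, every
`N ∈ ℕ` and `t > 0`, `∫₀¹ (∂ₜu)² ≥ γ² Σ_{k=0}^{N+2} (2k+1) m_k(t)²` with `m_0 = −∂ₓu(0,t)`,
`m_1 = 2u(0,t) − 2u(1,t) + ∂ₓu(0,t)` and, for `k ≥ 2`,
`m_k = Σ_{j=1}^{k−1}Σ_{i=0}^{j−1} ℓ_{kj}ℓ_{ji}⟨u(·,t),L_i⟩ + u(0,t)Σ_{j<k}ℓ_{kj}(−1)^j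
  − u(1,t)Σ_{j<k}ℓ_{kj} − (−1)^k ∂ₓu(0,t)`. -/
theorem bessel_time_derivative (γ : ℝ) (hγ : 0 < γ)
    (u ut ux uxx : ℝ → ℝ → ℝ)
    (hut : ∀ x t, HasDerivAt (fun s => u x s) (ut x t) t)
    (hux : ∀ x t, HasDerivAt (fun y => u y t) (ux x t) x)
    (huxx : ∀ x t, HasDerivAt (fun y => ux y t) (uxx x t) x)
    (hutc : Continuous fun p : ℝ × ℝ => ut p.1 p.2)
    (huxc : Continuous fun p : ℝ × ℝ => ux p.1 p.2)
    (huxxc : Continuous fun p : ℝ × ℝ => uxx p.1 p.2)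
    (hheat : ∀ t > (0:ℝ), ∀ x ∈ Set.Ioo (0:ℝ) 1, ut x t = γ * uxx x t)
    (hneu : ∀ t > (0:ℝ), ux 1 t = 0)
    (N : ℕ) (t : ℝ) (ht : 0 < t) :
    (∫ x in (0:ℝ)..1, (ut x t) ^ 2) ≥
      γ ^ 2 * ∑ k ∈ Finset.range (N + 3),
        (2 * (k : ℝ) + 1) *
          (if k = 0 then -(ux 0 t)
           else if k = 1 then 2 * u 0 t - 2 * u 1 t + ux 0 t
           else (∑ j ∈ Finset.Ico 1 k, ∑ i ∈ Finset.range j,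
                  ell k j * ell j i * ∫ x in (0:ℝ)..1, u x t * shiftedLegendre i x)
                + u 0 t * (∑ j ∈ Finset.range k, ell k j * (-1 : ℝ) ^ j)
                - u 1 t * (∑ j ∈ Finset.range k, ell k j)
                - (-1 : ℝ) ^ k * ux 0 t) ^ 2 := by
  have hutc' : Continuous fun x : ℝ => ut x t := hutc.comp (continuous_id.prodMk continuous_const)
  have huxc' : Continuous fun x : ℝ => ux x t := huxc.comp (continuous_id.prodMk continuous_const)
  have huxxc' : Continuous fun x : ℝ => uxx x t :=
    huxxc.comp (continuous_id.prodMk continuous_const)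
  have huc' : Continuous fun y : ℝ => u y t :=
    continuous_iff_continuousAt.mpr fun x => (hux x t).continuousAt
  have hu' : ∀ x, HasDerivAt (fun y => u y t) (ux x t) x := fun x => hux x t
  have hux' : ∀ x, HasDerivAt (fun y => ux y t) (uxx x t) x := fun x => huxx x t
  -- heat equation on closed interval
  have heq : ∀ x ∈ Set.Icc (0:ℝ) 1, ut x t = γ * uxx x t := by
    have hzero : Set.EqOn (fun x => ut x t - γ * uxx x t) 0 (Set.Ioo 0 1) := fun x hx => by
      simp [hheat t ht x hx]
    have hcl := hzero.closure (hutc'.sub (continuous_const.mul huxxc')) continuous_const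
    rw [closure_Ioo (by norm_num : (0:ℝ) ≠ 1)] at hcl
    intro x hx
    have h2 := hcl hx
    simp only [Pi.zero_apply, sub_eq_zero] at h2
    exact h2
  set I : ℕ → ℝ := fun i => ∫ x in (0:ℝ)..1, u x t * (legPoly i).eval x with hI
  set M : ℕ → ℝ := fun k => ∫ x in (0:ℝ)..1, uxx x t * (legPoly k).eval x with hM
  -- IBP for ux against legPoly j
  have hux_leg : ∀ j : ℕ, (∫ x in (0:ℝ)..1, ux x t * (legPoly j).eval x)
      = u 1 t - u 0 t * (-1:ℝ)^j - ∑ i ∈ Finset.range j, ell j i * I i := by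
    intro j
    rw [ibp_fun (fun y => u y t) (fun y => ux y t) hu' huxc' (legPoly j),
      legPoly_eval_one, legPoly_eval_zero, deriv_legPoly j,
      integral_mul_sum _ huc' j (ell j)]
    ring
  have hMform : ∀ k : ℕ, M k =
      (∑ j ∈ Finset.range k, ∑ i ∈ Finset.range j, ell k j * ell j i * I i)
      + u 0 t * (∑ j ∈ Finset.range k, ell k j * (-1:ℝ)^j)
      - u 1 t * (∑ j ∈ Finset.range k, ell k j)
      - (-1:ℝ)^k * ux 0 t := by
    intro k
    simp only [hM]
    rw [ibp_fun (fun y => ux y t) (fun y => uxx y t) hux' huxxc' (legPoly k),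
      legPoly_eval_one, legPoly_eval_zero, hneu t ht, deriv_legPoly k,
      integral_mul_sum _ huxc' k (ell k)]
    have hexp : ∑ j ∈ Finset.range k,
        ell k j * ∫ x in (0:ℝ)..1, ux x t * (legPoly j).eval x
        = u 1 t * (∑ j ∈ Finset.range k, ell k j)
          - u 0 t * (∑ j ∈ Finset.range k, ell k j * (-1:ℝ)^j)
          - ∑ j ∈ Finset.range k, ∑ i ∈ Finset.range j, ell k j * ell j i * I i := by
      calc ∑ j ∈ Finset.range k, ell k j * ∫ x in (0:ℝ)..1, ux x t * (legPoly j).eval x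
          = ∑ j ∈ Finset.range k, (ell k j * u 1 t - ell k j * (-1:ℝ)^j * u 0 t
              - ∑ i ∈ Finset.range j, ell k j * ell j i * I i) := by
            refine Finset.sum_congr rfl fun j _ => ?_
            rw [hux_leg j, mul_sub, mul_sub, Finset.mul_sum]
            have : ∑ i ∈ Finset.range j, ell k j * (ell j i * I i)
                = ∑ i ∈ Finset.range j, ell k j * ell j i * I i :=
              Finset.sum_congr rfl fun i _ => by ring
            rw [this]; ring
        _ = _ := by
            rw [Finset.sum_sub_distrib, Finset.sum_sub_distrib, ← Finset.sum_mul,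
              ← Finset.sum_mul]
            ring
    rw [hexp]
    ring
  -- the statement's m_k equals M k
  have hMk : ∀ k : ℕ,
      (if k = 0 then -(ux 0 t)
       else if k = 1 then 2 * u 0 t - 2 * u 1 t + ux 0 t
       else (∑ j ∈ Finset.Ico 1 k, ∑ i ∈ Finset.range j,
              ell k j * ell j i * ∫ x in (0:ℝ)..1, u x t * shiftedLegendre i x)
            + u 0 t * (∑ j ∈ Finset.range k, ell k j * (-1 : ℝ) ^ j)
            - u 1 t * (∑ j ∈ Finset.range k, ell k j)
            - (-1 : ℝ) ^ k * ux 0 t) = M k := by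
    intro k
    rw [hMform k]
    rcases Nat.lt_or_ge k 2 with hk2 | hk2
    · interval_cases k
      · simp
      · rw [if_neg one_ne_zero, if_pos rfl]
        simp only [Finset.range_one, Finset.sum_singleton, Finset.range_zero,
          Finset.sum_empty]
        have he : ell 1 0 = 2 := by unfold ell; norm_num
        rw [he]; norm_num; ring
    · rw [if_neg (by omega), if_neg (by omega)]
      have hsl : ∀ i : ℕ, (∫ x in (0:ℝ)..1, u x t * shiftedLegendre i x) = I i := by
        intro i
        rw [hI]
        congr 1; funext x; rw [shiftedLegendre_eq]
      have hsum_eq : (∑ j ∈ Finset.Ico 1 k, ∑ i ∈ Finset.range j,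
            ell k j * ell j i * ∫ x in (0:ℝ)..1, u x t * shiftedLegendre i x)
          = ∑ j ∈ Finset.range k, ∑ i ∈ Finset.range j, ell k j * ell j i * I i := by
        have h1 : ∀ j, (∑ i ∈ Finset.range j,
            ell k j * ell j i * ∫ x in (0:ℝ)..1, u x t * shiftedLegendre i x)
            = ∑ i ∈ Finset.range j, ell k j * ell j i * I i :=
          fun j => Finset.sum_congr rfl fun i _ => by rw [hsl i]
        have h2 : ∑ j ∈ Finset.Ico 0 k, (∑ i ∈ Finset.range j, ell k j * ell j i * I i)
            = (∑ i ∈ Finset.range 0, ell k 0 * ell 0 i * I i)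
              + ∑ j ∈ Finset.Ico 1 k, ∑ i ∈ Finset.range j, ell k j * ell j i * I i :=
          Finset.sum_eq_sum_Ico_succ_bot (by omega)
            (fun j => ∑ i ∈ Finset.range j, ell k j * ell j i * I i)
        calc (∑ j ∈ Finset.Ico 1 k, ∑ i ∈ Finset.range j,
                ell k j * ell j i * ∫ x in (0:ℝ)..1, u x t * shiftedLegendre i x)
            = ∑ j ∈ Finset.Ico 1 k, ∑ i ∈ Finset.range j, ell k j * ell j i * I i :=
              Finset.sum_congr rfl fun j _ => h1 j
          _ = ∑ j ∈ Finset.Ico 0 k, ∑ i ∈ Finset.range j, ell k j * ell j i * I i := by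
              rw [h2]; simp
          _ = ∑ j ∈ Finset.range k, ∑ i ∈ Finset.range j, ell k j * ell j i * I i := by
              rw [Finset.range_eq_Ico]
      rw [hsum_eq]
  -- relating time derivative coefficients
  have hck : ∀ k : ℕ, (∫ x in (0:ℝ)..1, ut x t * (legPoly k).eval x) = γ * M k := by
    intro k
    have hEq : Set.EqOn (fun x => ut x t * (legPoly k).eval x)
        (fun x => γ * (uxx x t * (legPoly k).eval x)) (Set.uIcc 0 1) := by
      intro x hx
      rw [Set.uIcc_of_le (by norm_num : (0:ℝ) ≤ 1)] at hx
      simp only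
      rw [heq x hx]; ring
    rw [intervalIntegral.integral_congr hEq, intervalIntegral.integral_const_mul]
  have hbessel := bessel (fun x => ut x t) hutc' (N+3)
  have hfinal : ∑ k ∈ Finset.range (N+3),
      (2*(k:ℝ)+1) * (∫ x in (0:ℝ)..1, ut x t * (legPoly k).eval x)^2
      = γ ^ 2 * ∑ k ∈ Finset.range (N + 3), (2 * (k : ℝ) + 1) *
        (if k = 0 then -(ux 0 t)
         else if k = 1 then 2 * u 0 t - 2 * u 1 t + ux 0 t
         else (∑ j ∈ Finset.Ico 1 k, ∑ i ∈ Finset.range j,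
                ell k j * ell j i * ∫ x in (0:ℝ)..1, u x t * shiftedLegendre i x)
              + u 0 t * (∑ j ∈ Finset.range k, ell k j * (-1 : ℝ) ^ j)
              - u 1 t * (∑ j ∈ Finset.range k, ell k j)
              - (-1 : ℝ) ^ k * ux 0 t) ^ 2 := by
    rw [Finset.mul_sum]
    refine Finset.sum_congr rfl fun k _ => ?_
    rw [hck k, hMk k]
    ring
  rw [← hfinal]
  exact hbessel
end
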